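/- Let k, l be nonzero integers. The lattice with Gram matrix (1/2)·((0,0,k),(0,2l,0),(k,0,0)), i.e., the quadratic form (x,y,z) ↦ kxz + ly², represents ε ∈ {1, -1} over ℤ if and only if gcd(k,l) = 1 and εl is a quadratic residue modulo k. -/
import Mathlib


/-- For nonzero integers `k, l` and `ε = ±1`, the quadratic form
`(x,y,z) ↦ kxz + ly²` represents `ε` over `ℤ` if and only if `gcd(k,l) = 1` and
`εl` is a quadratic residue modulo `k`. -/
theorem stmt_16 (k l : ℤ) (hk : k ≠ 0) (hl : l ≠ 0) (ε : ℤ) (hε : ε = 1 ∨ ε = -1) :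
    (∃ x y z : ℤ, k * x * z + l * y ^ 2 = ε) ↔
    (IsCoprime k l ∧ ∃ ξ : ℤ, k ∣ (ε * l - ξ ^ 2)) := by
  have hε2 : ε * ε = 1 := by rcases hε with h | h <;> subst h <;> ring
  constructor
  · rintro ⟨x, y, z, h⟩
    have hky : IsCoprime k y := ⟨ε * x * z, ε * l * y, by linear_combination ε * h + hε2⟩
    obtain ⟨a, b, hab⟩ := id hky
    refine ⟨⟨ε * x * z, ε * y ^ 2, by linear_combination ε * h + hε2⟩, b, ?_⟩
    have hmul : k ∣ (ε * l - b ^ 2) * y ^ 2 :=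
      ⟨-(ε * x * z) + 2 * a - a ^ 2 * k, by
        linear_combination ε * h + hε2 + (a * k - b * y - 1) * hab⟩
    exact (IsCoprime.pow_right hky).dvd_of_dvd_mul_right hmul
  · rintro ⟨hco, ξ, hξ⟩
    obtain ⟨d, hd⟩ := hξ
    obtain ⟨a, b, hab⟩ := hco
    exact ⟨1, b * ξ, ε * (2 * a - a ^ 2 * k) + l * b ^ 2 * d, by
      linear_combination (-(l * b ^ 2)) * hd + ε * (b * l + 1 - a * k) * hab⟩
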